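/- Let X₁, X₂, X₃, … be independent random variables with X_i taking the value 0 with probability γ_i and the value 1 with probability 1 − γ_i. Then lim_{n→∞} ℙ(Σ_{i=1}^{n} X_i ≡ 0 (mod 2)) = 1/2 if and only if either γ_i = 1/2 for some i, or the series Σ_{i=1}^{∞} min{γ_i, 1 − γ_i} diverges. -/

import Mathlib

open MeasureTheory ProbabilityTheory Filter
open scoped ENNReal

/-- Weierstrass product inequality. -/
private lemma aux_prod_one_sub (s : Finset ℕ) (g : ℕ → ℝ) (h0 : ∀ i ∈ s, 0 ≤ g i)
    (h1 : ∀ i ∈ s, g i ≤ 1) : 1 - ∑ i ∈ s, g i ≤ ∏ i ∈ s, (1 - g i) := by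
  classical
  induction s using Finset.cons_induction with
  | empty => simp
  | cons a s ha ih =>
    rw [Finset.prod_cons, Finset.sum_cons]
    have h0a := h0 a (Finset.mem_cons_self a s)
    have h1a := h1 a (Finset.mem_cons_self a s)
    have ih' := ih (fun i hi => h0 i (Finset.mem_cons_of_mem hi))
      (fun i hi => h1 i (Finset.mem_cons_of_mem hi))
    have hs : 0 ≤ ∑ i ∈ s, g i := Finset.sum_nonneg (fun i hi => h0 i (Finset.mem_cons_of_mem hi))
    nlinarith [mul_le_mul_of_nonneg_left ih' (by linarith : (0:ℝ) ≤ 1 - g a)]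

private lemma aux_prod_tendsto_zero_iff (a : ℕ → ℝ) (ha : ∀ i, |a i| ≤ 1) :
    Tendsto (fun n => ∏ i ∈ Finset.range n, a i) atTop (nhds 0) ↔
      (∃ i, a i = 0) ∨ ¬ Summable (fun i => 1 - |a i|) := by
  constructor
  · intro ht
    by_contra hc
    push_neg at hc
    obtain ⟨hne, hsum⟩ := hc
    have hpos : ∀ i, 0 < |a i| := fun i => abs_pos.2 (hne i)
    have habs : Tendsto (fun n => ∏ i ∈ Finset.range n, |a i|) atTop (nhds 0) := by
      simpa [Finset.abs_prod, abs_zero] using ht.abs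
    have hcau : CauchySeq (fun n => ∑ i ∈ Finset.range n, (1 - |a i|)) :=
      hsum.hasSum.tendsto_sum_nat.cauchySeq
    obtain ⟨N, hN⟩ := Metric.cauchySeq_iff'.1 hcau (1/2) (by norm_num)
    have hc : 0 < ∏ i ∈ Finset.range N, |a i| :=
      Finset.prod_pos (fun i _ => hpos i)
    have key : ∀ n, N ≤ n → (∏ i ∈ Finset.range N, |a i|) / 2 ≤ ∏ i ∈ Finset.range n, |a i| := by
      intro n hn
      have hsplit : (∏ i ∈ Finset.range N, |a i|) * ∏ i ∈ Finset.Ico N n, |a i|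
          = ∏ i ∈ Finset.range n, |a i| := Finset.prod_range_mul_prod_Ico _ hn
      have htail : ∑ i ∈ Finset.Ico N n, (1 - |a i|) < 1/2 := by
        have := hN n hn
        rw [Real.dist_eq] at this
        have hico : ∑ i ∈ Finset.Ico N n, (1 - |a i|)
            = ∑ i ∈ Finset.range n, (1 - |a i|) - ∑ i ∈ Finset.range N, (1 - |a i|) :=
          Finset.sum_Ico_eq_sub _ hn
        rw [hico]
        calc _ ≤ |∑ i ∈ Finset.range n, (1 - |a i|) - ∑ i ∈ Finset.range N, (1 - |a i|)| :=
              le_abs_self _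
        _ < 1/2 := this
      have hw : 1 - ∑ i ∈ Finset.Ico N n, (1 - |a i|) ≤ ∏ i ∈ Finset.Ico N n, (1 - (1 - |a i|)) :=
        aux_prod_one_sub _ _ (fun i _ => by linarith [ha i]) (fun i _ => by linarith [(hpos i)])
      simp only [sub_sub_cancel] at hw
      have h2 : (1:ℝ)/2 ≤ ∏ i ∈ Finset.Ico N n, |a i| := by linarith
      calc (∏ i ∈ Finset.range N, |a i|) / 2
          = (∏ i ∈ Finset.range N, |a i|) * (1/2) := by ring
        _ ≤ (∏ i ∈ Finset.range N, |a i|) * ∏ i ∈ Finset.Ico N n, |a i| :=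
            mul_le_mul_of_nonneg_left h2 hc.le
        _ = _ := hsplit
    have hev : ∀ᶠ n in atTop,
        (∏ i ∈ Finset.range n, |a i|) < (∏ i ∈ Finset.range N, |a i|) / 2 :=
      (habs.eventually (gt_mem_nhds (by positivity))).mono (fun n h => h)
    obtain ⟨n, hn1, hn2⟩ := (hev.and (eventually_ge_atTop N)).exists
    exact absurd (key n hn2) (not_le.2 hn1)
  · rintro (⟨i, hi⟩ | hsum)
    · apply Tendsto.congr' _ tendsto_const_nhds
      filter_upwards [eventually_ge_atTop (i+1)] with n hn
      exact (Finset.prod_eq_zero (Finset.mem_range.2 hn) hi).symm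
    · have hnn : ∀ i, 0 ≤ 1 - |a i| := fun i => by linarith [ha i]
      have hdiv : Tendsto (fun n => ∑ i ∈ Finset.range n, (1 - |a i|)) atTop atTop :=
        (not_summable_iff_tendsto_nat_atTop_of_nonneg hnn).1 hsum
      have hexp : Tendsto (fun n => Real.exp (-(∑ i ∈ Finset.range n, (1 - |a i|))))
          atTop (nhds 0) :=
        Real.tendsto_exp_atBot.comp (tendsto_neg_atBot_iff.2 hdiv)
      have hle : ∀ n, ∏ i ∈ Finset.range n, |a i|
          ≤ Real.exp (-(∑ i ∈ Finset.range n, (1 - |a i|))) := by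
        intro n
        rw [← Finset.sum_neg_distrib, Real.exp_sum]
        simp only [neg_sub]
        apply Finset.prod_le_prod (fun i _ => abs_nonneg _)
        intro i _
        have := Real.add_one_le_exp (|a i| - 1)
        linarith
      have habs : Tendsto (fun n => ∏ i ∈ Finset.range n, |a i|) atTop (nhds 0) :=
        squeeze_zero (fun n => Finset.prod_nonneg (fun i _ => abs_nonneg _)) hle hexp
      have : Tendsto (fun n => |∏ i ∈ Finset.range n, a i|) atTop (nhds 0) := by
        simpa [Finset.abs_prod] using habs
      exact tendsto_zero_iff_abs_tendsto_zero _ |>.2 this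

private lemma aux_rec {Ω : Type*} [MeasurableSpace Ω] (μ : Measure Ω) [IsProbabilityMeasure μ]
    (X : ℕ → Ω → ℕ)
    (hmeas : ∀ i, Measurable (X i))
    (h01 : ∀ i ω, X i ω ≤ 1)
    (hind : iIndepFun X μ)
    (γ : ℕ → ℝ) (hγ : ∀ i, γ i = (μ {ω | X i ω = 0}).toReal) (n : ℕ) :
    (μ {ω | Even (∑ i ∈ Finset.range (n+1), X i ω)}).toReal - 1/2
      = (2 * γ n - 1) * ((μ {ω | Even (∑ i ∈ Finset.range n, X i ω)}).toReal - 1/2) := by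
  classical
  have hIF : IndepFun (∑ i ∈ Finset.range n, X i) (X n) μ :=
    hind.indepFun_finsetSum_of_notMem hmeas (by simp)
  have hA : MeasurableSet {ω | Even (∑ i ∈ Finset.range n, X i ω)} := by
    have : Measurable fun ω => ∑ i ∈ Finset.range n, X i ω :=
      Finset.measurable_sum _ (fun i _ => hmeas i)
    exact this (show MeasurableSet {k : ℕ | Even k} from trivial)
  have hB0 : MeasurableSet {ω | X n ω = 0} := hmeas n (measurableSet_singleton 0)
  have hB1 : MeasurableSet {ω | X n ω = 1} := hmeas n (measurableSet_singleton 1)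
  have hset : {ω | Even (∑ i ∈ Finset.range (n+1), X i ω)}
      = ({ω | Even (∑ i ∈ Finset.range n, X i ω)} ∩ {ω | X n ω = 0})
        ∪ ({ω | Even (∑ i ∈ Finset.range n, X i ω)}ᶜ ∩ {ω | X n ω = 1}) := by
    ext ω
    have := h01 n ω
    simp only [Set.mem_setOf_eq, Set.mem_union, Set.mem_inter_iff, Set.mem_compl_iff,
      Finset.sum_range_succ, Nat.even_iff] at *
    omega
  have hdisj : Disjoint ({ω | Even (∑ i ∈ Finset.range n, X i ω)} ∩ {ω | X n ω = 0})
      ({ω | Even (∑ i ∈ Finset.range n, X i ω)}ᶜ ∩ {ω | X n ω = 1}) := by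
    apply Set.disjoint_left.2
    rintro ω ⟨h1, -⟩ ⟨h2, -⟩
    exact h2 h1
  have hpre : ∀ (T : Set ℕ), (∑ i ∈ Finset.range n, X i) ⁻¹' T
      = {ω | (∑ i ∈ Finset.range n, X i ω) ∈ T} := by
    intro T; ext ω; simp [Finset.sum_apply]
  have hmul0 : μ ({ω | Even (∑ i ∈ Finset.range n, X i ω)} ∩ {ω | X n ω = 0})
      = μ {ω | Even (∑ i ∈ Finset.range n, X i ω)} * μ {ω | X n ω = 0} := by
    have := hIF.measure_inter_preimage_eq_mul {k : ℕ | Even k} {0} trivial trivial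
    simpa [hpre, Set.preimage, Set.mem_setOf_eq] using this
  have hmul1 : μ ({ω | Even (∑ i ∈ Finset.range n, X i ω)}ᶜ ∩ {ω | X n ω = 1})
      = μ {ω | Even (∑ i ∈ Finset.range n, X i ω)}ᶜ * μ {ω | X n ω = 1} := by
    have := hIF.measure_inter_preimage_eq_mul {k : ℕ | ¬ Even k} {1} trivial trivial
    simpa [hpre, Set.preimage, Set.mem_setOf_eq, Set.compl_setOf] using this
  have hcompl : μ {ω | Even (∑ i ∈ Finset.range n, X i ω)}ᶜ
      = 1 - μ {ω | Even (∑ i ∈ Finset.range n, X i ω)} := prob_compl_eq_one_sub hA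
  have hX1 : {ω | X n ω = 1} = {ω | X n ω = 0}ᶜ := by
    ext ω; have := h01 n ω; simp only [Set.mem_setOf_eq, Set.mem_compl_iff]; omega
  have hX1' : μ {ω | X n ω = 1} = 1 - μ {ω | X n ω = 0} := by
    rw [hX1, prob_compl_eq_one_sub hB0]
  rw [hset, measure_union hdisj (hA.compl.inter hB1), hmul0, hmul1, hcompl, hX1']
  have hle : ∀ s : Set Ω, μ s ≤ 1 := fun s => prob_le_one
  have h1 : ((1:ℝ≥0∞) - μ {ω | Even (∑ i ∈ Finset.range n, X i ω)}).toReal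
      = 1 - (μ {ω | Even (∑ i ∈ Finset.range n, X i ω)}).toReal := by
    rw [ENNReal.toReal_sub_of_le (hle _) (by norm_num)]; simp
  have h2 : ((1:ℝ≥0∞) - μ {ω | X n ω = 0}).toReal = 1 - (μ {ω | X n ω = 0}).toReal := by
    rw [ENNReal.toReal_sub_of_le (hle _) (by norm_num)]; simp
  rw [ENNReal.toReal_add (by finiteness) (by finiteness), ENNReal.toReal_mul,
    ENNReal.toReal_mul, h1, h2, hγ n]
  ring

/-- Binary central limit theorem: let `X 0, X 1, …` (representing `X₁, X₂, …`) be
independent `{0,1}`-valued random variables with `ℙ(X i = 0) = γ i`.  Then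
`ℙ(X₁ + ⋯ + Xₙ ≡ 0 (mod 2)) → 1/2` as `n → ∞` iff some `γ i = 1/2` or
`Σ min{γ i, 1 - γ i}` diverges. -/
theorem stmt6 {Ω : Type*} [MeasurableSpace Ω] (μ : Measure Ω) [IsProbabilityMeasure μ]
    (X : ℕ → Ω → ℕ)
    (hmeas : ∀ i, Measurable (X i))
    (h01 : ∀ i ω, X i ω ≤ 1)
    (hind : iIndepFun X μ)
    (γ : ℕ → ℝ) (hγ : ∀ i, γ i = (μ {ω | X i ω = 0}).toReal) :
    Tendsto (fun n : ℕ => (μ {ω | Even (∑ i ∈ Finset.range n, X i ω)}).toReal)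
        atTop (nhds (1 / 2)) ↔
      (∃ i, γ i = 1 / 2) ∨ ¬ Summable (fun i => min (γ i) (1 - γ i)) := by
  classical
  set q : ℕ → ℝ := fun n => (μ {ω | Even (∑ i ∈ Finset.range n, X i ω)}).toReal with hqdef
  set P : ℕ → ℝ := fun n => ∏ i ∈ Finset.range n, (2 * γ i - 1) with hPdef
  -- γ bounds
  have hγ0 : ∀ i, 0 ≤ γ i := fun i => (hγ i) ▸ ENNReal.toReal_nonneg
  have hγ1 : ∀ i, γ i ≤ 1 := by
    intro i
    rw [hγ i]
    have : (μ {ω | X i ω = 0}).toReal ≤ (1:ℝ≥0∞).toReal :=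
      ENNReal.toReal_mono (by norm_num) prob_le_one
    simpa using this
  have ha : ∀ i, |2 * γ i - 1| ≤ 1 := fun i =>
    abs_le.2 ⟨by linarith [hγ0 i], by linarith [hγ1 i]⟩
  -- explicit formula
  have hq : ∀ n, q n - 1/2 = (1/2) * P n := by
    intro n
    induction n with
    | zero =>
      have huniv : {ω : Ω | Even (∑ i ∈ Finset.range 0, X i ω)} = Set.univ := by
        ext ω; simp
      simp [hqdef, hPdef, huniv]
      norm_num
    | succ n ih =>
      have hrec := aux_rec μ X hmeas h01 hind γ hγ n
      have : q (n+1) - 1/2 = (2 * γ n - 1) * (q n - 1/2) := hrec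
      rw [this, ih, hPdef]
      simp only [Finset.prod_range_succ]
      ring
  have hPq : ∀ n, P n = 2 * (q n - 1/2) := fun n => by have := hq n; linarith
  have htend : Tendsto q atTop (nhds (1/2)) ↔ Tendsto P atTop (nhds 0) := by
    constructor
    · intro h
      have h2 : Tendsto (fun n => 2 * (q n - 1/2)) atTop (nhds (2 * (1/2 - 1/2))) :=
        (h.sub_const (1/2)).const_mul 2
      have hfun : (fun n => 2 * (q n - 1/2)) = P := by
        funext n; exact (hPq n).symm
      rw [hfun] at h2
      simpa using h2
    · intro h
      have h2 : Tendsto (fun n => 1/2 * P n + 1/2) atTop (nhds (1/2 * 0 + 1/2)) :=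
        (h.const_mul (1/2)).add_const (1/2)
      have hfun : (fun n => 1/2 * P n + 1/2) = q := by
        funext n; have := hq n; linarith
      rw [hfun] at h2
      simpa using h2
  rw [show Tendsto (fun n : ℕ => (μ {ω | Even (∑ i ∈ Finset.range n, X i ω)}).toReal)
      atTop (nhds (1/2)) = Tendsto q atTop (nhds (1/2)) from rfl,
    htend, hPdef]
  rw [aux_prod_tendsto_zero_iff _ ha]
  constructor <;> rintro (⟨i, hi⟩ | h)
  · exact Or.inl ⟨i, by linarith⟩
  · refine Or.inr fun hs => h ?_
    have hfun : (fun i => 1 - |2 * γ i - 1|) = fun i => 2 * min (γ i) (1 - γ i) := by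
      funext i
      rcases le_total (γ i) (1/2) with hle | hle
      · rw [abs_of_nonpos (by linarith), min_eq_left (by linarith)]; ring
      · rw [abs_of_nonneg (by linarith), min_eq_right (by linarith)]; ring
    rw [hfun]
    exact hs.mul_left 2
  · exact Or.inl ⟨i, by linarith⟩
  · refine Or.inr fun hs => h ?_
    have hfun : (fun i => min (γ i) (1 - γ i)) = fun i => (1/2) * (1 - |2 * γ i - 1|) := by
      funext i
      rcases le_total (γ i) (1/2) with hle | hle
      · rw [abs_of_nonpos (by linarith), min_eq_left (by linarith)]; ring
      · rw [abs_of_nonneg (by linarith), min_eq_right (by linarith)]; ring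
    rw [hfun]
    exact hs.mul_left _
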